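/- Let E be a directed graph, K a field, and c a simple closed path of length n. Then the ℤ-graded L_K(E)-module KL_{c^∞} is graded simple but not simple; for m, m' ∈ ℤ, the shifted modules KL_{c^∞}(m) and KL_{c^∞}(m') are graded isomorphic if and only if n divides m − m'; and if c' is another simple closed path such that c'^∞ is not tail-equivalent to c^∞, then KL_{c^∞}(m) and KL_{c'^∞}(m') are not graded isomorphic for any m, m' ∈ ℤ. -/

import Mathlib

open scoped Classical

/-- A directed graph: vertices, edges, source and range maps. -/
structure DirGraph : Type 1 where
  V : Type
  E : Type
  s : E → V
  r : E → V

namespace DirGraph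

variable (G : DirGraph)

/-- A finite path: a source vertex together with a compatible list of edges
(the empty list gives the path of length 0 at `src`). -/
structure FinPath where
  src : G.V
  edges : List G.E
  src_eq : ∀ e ∈ edges.head?, G.s e = src
  chain : edges.Chain' (fun e f => G.r e = G.s f)

variable {G}

/-- The range of a finite path. -/
def FinPath.rng (μ : G.FinPath) : G.V :=
  ((μ.edges.getLast?).map G.r).getD μ.src

/-- The length of a finite path. -/
def FinPath.length (μ : G.FinPath) : ℕ := μ.edges.length

variable (G)

/-- An infinite path. -/
structure InfPath where
  edges : ℕ → G.E
  chain : ∀ n, G.r (edges n) = G.s (edges (n + 1))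

/-- The source of an infinite path. -/
def InfPath.src {G : DirGraph} (p : G.InfPath) : G.V := G.s (p.edges 0)

def IsSink (v : G.V) : Prop := ∀ e, G.s e ≠ v

def IsInfEmitter (v : G.V) : Prop := {e | G.s e = v}.Infinite

def IsSingular (v : G.V) : Prop := IsSink G v ∨ IsInfEmitter G v

/-- Boundary paths: infinite paths, together with finite paths ending in a singular vertex. -/
def BPath : Type := {x : G.FinPath ⊕ G.InfPath // ∀ μ, x = Sum.inl μ → IsSingular G μ.rng}

variable {G}

/-- The source of a boundary path. -/
def BPath.src (x : G.BPath) : G.V :=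
  match x.1 with
  | Sum.inl μ => μ.src
  | Sum.inr p => p.src

def BPath.IsInfinite (x : G.BPath) : Prop := ∃ p, x.1 = Sum.inr p

/-- `IsCat μ p x` means `x = μ p`, i.e. `x` is the concatenation of the finite path `μ`
with the boundary path `p` (in particular `r(μ) = s(p)`). -/
def IsCat (μ : G.FinPath) (p x : G.BPath) : Prop :=
  μ.rng = p.src ∧
  match p.1, x.1 with
  | Sum.inl q, Sum.inl ξ => ξ.src = μ.src ∧ ξ.edges = μ.edges ++ q.edges
  | Sum.inr q, Sum.inr ξ =>
      (∀ (i : ℕ) (h : i < μ.edges.length), ξ.edges i = μ.edges.get ⟨i, h⟩) ∧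
      (∀ i : ℕ, ξ.edges (μ.edges.length + i) = q.edges i)
  | _, _ => False

/-- `x ∼_k y` : tail equivalence with lag `k`. -/
def TailEqLag (x y : G.BPath) (k : ℤ) : Prop :=
  ∃ (μ ν : G.FinPath) (p : G.BPath),
    IsCat μ p x ∧ IsCat ν p y ∧ (μ.length : ℤ) - (ν.length : ℤ) = k

/-- Tail equivalence. -/
def TailEq (x y : G.BPath) : Prop := ∃ k, TailEqLag x y k

/-- The tail-equivalence class (orbit) of a boundary path. -/
def orbit (x : G.BPath) : Set G.BPath := {y | TailEq y x}

/-- A closed path: positive length, same source and range. -/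
def FinPath.IsClosed (c : G.FinPath) : Prop := 0 < c.length ∧ c.rng = c.src

/-- A boundary path is rational if it is tail equivalent to `c^∞` for some closed path `c`;
here `c^∞` is characterized as the unique boundary path `p` with `p = c p`. -/
def IsRational (x : G.BPath) : Prop :=
  ∃ (c : G.FinPath) (p : G.BPath), 0 < c.length ∧ IsCat c p p ∧ TailEq x p

/-- A simple closed path: a closed path which is not a proper power of a closed path. -/
def FinPath.IsSimpleClosed (c : G.FinPath) : Prop :=
  c.IsClosed ∧
    ¬ ∃ (d : G.FinPath) (n : ℕ), 2 ≤ n ∧ d.IsClosed ∧ c.src = d.src ∧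
        c.edges = (List.replicate n d.edges).flatten

/-- A cycle: a closed path passing through no vertex twice. -/
def FinPath.IsCycle (c : G.FinPath) : Prop := c.IsClosed ∧ (c.edges.map G.s).Nodup

/-- An exit for a finite path. -/
def FinPath.HasExit (c : G.FinPath) : Prop :=
  ∃ (i : ℕ) (h : i < c.edges.length) (e : G.E),
    G.s e = G.s (c.edges.get ⟨i, h⟩) ∧ e ≠ c.edges.get ⟨i, h⟩

/-- `c` is a rotation of `d`. -/
def FinPath.IsRotationOf (c d : G.FinPath) : Prop := ∃ i, c.edges = d.edges.rotate i

/-- A maximal cycle: a cycle such that any cycle from which there is a finite path to its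
source is a rotation of it. -/
def FinPath.IsMaxCycle (c : G.FinPath) : Prop :=
  c.IsCycle ∧ ∀ d : G.FinPath, d.IsCycle →
    (∃ μ : G.FinPath, μ.src = d.src ∧ μ.rng = c.src) → d.IsRotationOf c

/-- A maximal sink: a sink with no finite path from the source of any cycle to it. -/
def IsMaxSink (G : DirGraph) (v : G.V) : Prop :=
  IsSink G v ∧ ¬ ∃ (d μ : G.FinPath), d.IsCycle ∧ μ.src = d.src ∧ μ.rng = v

/-- A graph is row-finite if every vertex emits finitely many edges. -/
def RowFinite (G : DirGraph) : Prop := ∀ v : G.V, {e | G.s e = v}.Finite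

/-- The set of predecessors of a vertex. -/
def preds (G : DirGraph) (v : G.V) : Set G.V := {w | ∃ μ : G.FinPath, μ.src = w ∧ μ.rng = v}

/-- The finite path of length 0 at a vertex. -/
def vertexPath (G : DirGraph) (v : G.V) : G.FinPath :=
  ⟨v, [], by intro e he; simp at he, List.isChain_nil⟩

/-- A singular vertex, seen as a boundary path. -/
def vertexBPath (G : DirGraph) (v : G.V) (h : IsSingular G v) : G.BPath :=
  ⟨Sum.inl (vertexPath G v), by
    intro μ hμ
    injection hμ with h2
    subst h2
    exact h⟩

/-- The finite path consisting of a single edge. -/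
def singleE (G : DirGraph) (e : G.E) : G.FinPath :=
  ⟨G.s e, [e], by
    intro f hf
    simp only [List.head?_cons, Option.mem_def, Option.some.injEq] at hf
    subst hf
    rfl, List.isChain_singleton e⟩

/-- `a_μ`: the product of the values of `a` along a finite path. -/
def aval {G : DirGraph} {K : Type} [Field K] (a : G.E → K) (μ : G.FinPath) : K :=
  (μ.edges.map a).prod

/-! ## The Leavitt path algebra -/

/-- Generators of the Leavitt path algebra: vertices, edges and ghost edges. -/
inductive Gen (G : DirGraph) : Type
  | vtx : G.V → Gen G
  | edg : G.E → Gen G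
  | ghd : G.E → Gen G

/-- The defining relations of the Leavitt path algebra. -/
inductive LRel (G : DirGraph) (K : Type) [Field K] :
    FreeAlgebra K (Gen G) → FreeAlgebra K (Gen G) → Prop
  | vv_eq (v : G.V) :
      LRel G K (FreeAlgebra.ι K (Gen.vtx v) * FreeAlgebra.ι K (Gen.vtx v))
        (FreeAlgebra.ι K (Gen.vtx v))
  | vv_ne {v w : G.V} (h : v ≠ w) :
      LRel G K (FreeAlgebra.ι K (Gen.vtx v) * FreeAlgebra.ι K (Gen.vtx w)) 0
  | e1l (e : G.E) :
      LRel G K (FreeAlgebra.ι K (Gen.vtx (G.s e)) * FreeAlgebra.ι K (Gen.edg e))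
        (FreeAlgebra.ι K (Gen.edg e))
  | e1r (e : G.E) :
      LRel G K (FreeAlgebra.ι K (Gen.edg e) * FreeAlgebra.ι K (Gen.vtx (G.r e)))
        (FreeAlgebra.ι K (Gen.edg e))
  | e2l (e : G.E) :
      LRel G K (FreeAlgebra.ι K (Gen.vtx (G.r e)) * FreeAlgebra.ι K (Gen.ghd e))
        (FreeAlgebra.ι K (Gen.ghd e))
  | e2r (e : G.E) :
      LRel G K (FreeAlgebra.ι K (Gen.ghd e) * FreeAlgebra.ι K (Gen.vtx (G.s e)))
        (FreeAlgebra.ι K (Gen.ghd e))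
  | ck1_eq (e : G.E) :
      LRel G K (FreeAlgebra.ι K (Gen.ghd e) * FreeAlgebra.ι K (Gen.edg e))
        (FreeAlgebra.ι K (Gen.vtx (G.r e)))
  | ck1_ne {e f : G.E} (h : e ≠ f) :
      LRel G K (FreeAlgebra.ι K (Gen.ghd e) * FreeAlgebra.ι K (Gen.edg f)) 0
  | ck2 (v : G.V) (hfin : {e | G.s e = v}.Finite) (hne : ∃ e, G.s e = v) :
      LRel G K (FreeAlgebra.ι K (Gen.vtx v))
        (∑ e ∈ hfin.toFinset, FreeAlgebra.ι K (Gen.edg e) * FreeAlgebra.ι K (Gen.ghd e))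

/-- The Leavitt path algebra of `G` over `K`. -/
abbrev LPA (G : DirGraph) (K : Type) [Field K] : Type := RingQuot (LRel G K)

/-- The image of a vertex in the Leavitt path algebra. -/
def ofV (G : DirGraph) (K : Type) [Field K] (v : G.V) : LPA G K :=
  RingQuot.mkAlgHom K (LRel G K) (FreeAlgebra.ι K (Gen.vtx v))

/-- The image of an edge in the Leavitt path algebra. -/
def ofE (G : DirGraph) (K : Type) [Field K] (e : G.E) : LPA G K :=
  RingQuot.mkAlgHom K (LRel G K) (FreeAlgebra.ι K (Gen.edg e))

/-- The image of a ghost edge in the Leavitt path algebra. -/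
def ofG (G : DirGraph) (K : Type) [Field K] (e : G.E) : LPA G K :=
  RingQuot.mkAlgHom K (LRel G K) (FreeAlgebra.ι K (Gen.ghd e))

/-- The element `μ` of the Leavitt path algebra associated to a finite path `μ`. -/
def pathElem (G : DirGraph) (K : Type) [Field K] (μ : G.FinPath) : LPA G K :=
  ofV G K μ.src * (μ.edges.map (ofE G K)).prod

/-- The element `μ^*` of the Leavitt path algebra associated to a finite path `μ`. -/
def pathStarElem (G : DirGraph) (K : Type) [Field K] (μ : G.FinPath) : LPA G K :=
  (μ.edges.reverse.map (ofG G K)).prod * ofV G K μ.src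

/-- The degree-`n` homogeneous component of the canonical `ℤ`-grading of the Leavitt
path algebra: the span of the monomials `μ ν^*` with `|μ| - |ν| = n`. -/
def LPAdeg (G : DirGraph) (K : Type) [Field K] (n : ℤ) : Submodule K (LPA G K) :=
  Submodule.span K {x | ∃ μ ν : G.FinPath, μ.rng = ν.rng ∧
    (μ.length : ℤ) - (ν.length : ℤ) = n ∧ x = pathElem G K μ * pathStarElem G K ν}

/-- `W` is a `ℤ`-grading making `M` a graded module over the canonically graded
Leavitt path algebra. -/
def IsModuleGrading (G : DirGraph) (K : Type) [Field K] (M : Type) [AddCommGroup M]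
    [Module K M] [Module (LPA G K) M] (W : ℤ → Submodule K M) : Prop :=
  DirectSum.IsInternal W ∧
    ∀ (m k : ℤ) (a : LPA G K) (y : M), a ∈ LPAdeg G K m → y ∈ W k → a • y ∈ W (m + k)

/-- A set is graded (with respect to a grading `W`) if each of its elements is a finite sum
of homogeneous elements of the set. -/
def GradedCarrier {K M : Type} [Field K] [AddCommGroup M] [Module K M]
    (W : ℤ → Submodule K M) (S : Set M) : Prop :=
  ∀ m ∈ S, ∃ l : List M, (∀ z ∈ l, z ∈ S ∧ ∃ k, z ∈ W k) ∧ l.sum = m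

/-- A graded isomorphism between graded modules over the Leavitt path algebra. -/
def GradedIsoLPA (G : DirGraph) (K : Type) [Field K] (M N : Type)
    [AddCommGroup M] [AddCommGroup N] [Module K M] [Module K N]
    [Module (LPA G K) M] [Module (LPA G K) N]
    (W : ℤ → Submodule K M) (W' : ℤ → Submodule K N) : Prop :=
  ∃ f : M ≃ₗ[LPA G K] N, (∀ k, ∀ m ∈ W k, f m ∈ W' k) ∧ ∀ k, ∀ n ∈ W' k, f.symm n ∈ W k

/-- A module over the Leavitt path algebra is unital if it is generated by the images of the
vertices. -/
def IsUnitalModule (G : DirGraph) (K : Type) [Field K] (M : Type) [AddCommGroup M]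
    [Module (LPA G K) M] : Prop :=
  ∀ m : M, m ∈ Submodule.span (LPA G K) {y : M | ∃ (v : G.V) (m' : M), y = ofV G K v • m'}

/-! ## Chen modules, specified by a basis and the action of the generators -/

/-- A specification of the (twisted) Chen module attached to a boundary path `x`:
an `L_K(E)`-module `M` which is a `K'`-vector space with basis the tail-equivalence class
of `x`, the generators acting by the τ-twisted shift formulas. Here `K ⊆ K'` is a field
extension and `τ : E¹ → K'` is a family of nonzero scalars. -/
structure ChenSpecT (G : DirGraph) (K K' : Type) [Field K] [Field K'] [Algebra K K']
    (τ : G.E → K') (x : G.BPath) (M : Type) [AddCommGroup M] [Module K' M]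
    [Module (LPA G K) M] : Type where
  tau_ne : ∀ e, τ e ≠ 0
  basis : Module.Basis (orbit x) K' M
  act_v : ∀ (v : G.V) (p : orbit x),
    ofV G K v • basis p = if v = BPath.src (p : G.BPath) then basis p else 0
  act_e : ∀ (e : G.E) (p q : orbit x), IsCat (singleE G e) (p : G.BPath) (q : G.BPath) →
    ofE G K e • basis p = τ e • basis q
  act_e_zero : ∀ (e : G.E) (p : orbit x),
    (¬ ∃ q : G.BPath, IsCat (singleE G e) (p : G.BPath) q) → ofE G K e • basis p = 0
  act_g : ∀ (e : G.E) (p q : orbit x), IsCat (singleE G e) (p : G.BPath) (q : G.BPath) →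
    ofG G K e • basis q = (τ e)⁻¹ • basis p
  act_g_zero : ∀ (e : G.E) (q : orbit x),
    (¬ ∃ p : G.BPath, IsCat (singleE G e) p (q : G.BPath)) → ofG G K e • basis q = 0

/-- Specification of the Chen module `V_{[x]}^a` twisted by `a : E¹ → K^*`
(`a = 1` gives `V_{[x]}`). -/
abbrev ChenSpec (G : DirGraph) (K : Type) [Field K] (a : G.E → K) (x : G.BPath) (M : Type)
    [AddCommGroup M] [Module K M] [Module (LPA G K) M] : Type :=
  ChenSpecT G K K a x M

/-- The canonical grading on a Chen module: the degree-`k` component is spanned by the basis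
elements tail-equivalent to `x` with lag `k`. -/
def chenW {G : DirGraph} {K' : Type} [Field K'] {x : G.BPath} {M : Type}
    [AddCommGroup M] [Module K' M] (b : Module.Basis (orbit x) K' M) (k : ℤ) : Submodule K' M :=
  Submodule.span K' (⇑b '' {p : orbit x | TailEqLag (p : G.BPath) x k})

/-! ## The module `K L_x` -/

/-- The set `L_x` of pairs `(y, k)` with `y ∼_k x`. -/
def Lset (G : DirGraph) (x : G.BPath) : Set (G.BPath × ℤ) := {yk | TailEqLag yk.1 x yk.2}

/-- The underlying `K`-vector space of the module `K L_x`, with basis `L_x`. -/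
abbrev KLCarrier (G : DirGraph) (K : Type) [Field K] (x : G.BPath) : Type := (Lset G x) →₀ K

/-- Specification of the `L_K(E)`-module structure on `K L_x`, given by
`(μ ν^*) ⬝ (y, k) = (μ p, |μ| - |ν| + k)` when `y = ν p`, and `0` otherwise. The module
structure is encoded as a `K`-algebra homomorphism `ρ` to the endomorphism algebra. -/
def KLSpec (G : DirGraph) (K : Type) [Field K] (x : G.BPath)
    (ρ : LPA G K →ₐ[K] Module.End K (KLCarrier G K x)) : Prop :=
  (∀ (μ ν : G.FinPath), μ.rng = ν.rng → ∀ (yk zk : Lset G x) (p : G.BPath),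
      IsCat ν p (yk : G.BPath × ℤ).1 → IsCat μ p (zk : G.BPath × ℤ).1 →
      (zk : G.BPath × ℤ).2 = (yk : G.BPath × ℤ).2 + (μ.length : ℤ) - (ν.length : ℤ) →
      ρ (pathElem G K μ * pathStarElem G K ν) (Finsupp.single yk 1) = Finsupp.single zk 1) ∧
  (∀ (μ ν : G.FinPath), μ.rng = ν.rng → ∀ yk : Lset G x,
      (¬ ∃ p : G.BPath, IsCat ν p (yk : G.BPath × ℤ).1) →
      ρ (pathElem G K μ * pathStarElem G K ν) (Finsupp.single yk 1) = 0)

/-- The canonical grading of `K L_x`: `(y, k)` is homogeneous of degree `k`. -/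
noncomputable def KLgr (G : DirGraph) (K : Type) [Field K] (x : G.BPath) (k : ℤ) :
    Submodule K (KLCarrier G K x) :=
  Submodule.span K {m | ∃ yk : Lset G x, (yk : G.BPath × ℤ).2 = k ∧ m = Finsupp.single yk 1}

end DirGraph

open DirGraph
namespace DirGraph

variable {G : DirGraph}

theorem InfPath.ext' {p q : G.InfPath} (h : p.edges = q.edges) : p = q := by
  cases p; cases q; simp_all

/-- An infinite path as a boundary path. -/
def mkB (q : G.InfPath) : G.BPath :=
  ⟨Sum.inr q, by intro μ h; simp at h⟩

theorem mkB_inj {q q' : G.InfPath} (h : mkB q = mkB q') : q = q' := by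
  have := congrArg Subtype.val h
  simpa [mkB] using this

theorem mkB_src (q : G.InfPath) : (mkB q).src = G.s (q.edges 0) := rfl

theorem mkB_isInfinite (q : G.InfPath) : (mkB q).IsInfinite := ⟨q, rfl⟩

theorem eq_mkB_of_isInfinite {x : G.BPath} (h : x.IsInfinite) : ∃ q, x = mkB q := by
  obtain ⟨q, hq⟩ := h
  exact ⟨q, Subtype.ext hq⟩

/-- The tail of an infinite path. -/
def tl (q : G.InfPath) (N : ℕ) : G.InfPath :=
  ⟨fun i => q.edges (N + i), fun i => by
    have := q.chain (N + i)
    simpa [Nat.add_assoc] using this⟩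

@[simp] theorem tl_edges (q : G.InfPath) (N i : ℕ) : (tl q N).edges i = q.edges (N + i) := rfl

theorem tl_tl (q : G.InfPath) (N M : ℕ) : tl (tl q N) M = tl q (N + M) := by
  apply InfPath.ext'; funext i; simp [Nat.add_assoc]

theorem tl_zero (q : G.InfPath) : tl q 0 = q := by
  apply InfPath.ext'; funext i; simp

/-- The prefix of an infinite path, as a finite path. -/
def pre (q : G.InfPath) (N : ℕ) : G.FinPath :=
  ⟨G.s (q.edges 0), List.ofFn (fun i : Fin N => q.edges i), by
    intro e he
    cases N with
    | zero => simp at he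
    | succ n =>
      simp [List.ofFn_succ] at he
      simp [he], by
    apply List.isChain_iff_getElem.mpr
    intro i h
    simp only [List.getElem_ofFn]
    simp only [List.length_ofFn] at h
    simpa using q.chain i⟩

@[simp] theorem pre_edges_length (q : G.InfPath) (N : ℕ) : (pre q N).edges.length = N := by
  simp [pre]

@[simp] theorem pre_length (q : G.InfPath) (N : ℕ) : (pre q N).length = N := by
  simp [FinPath.length, pre]

@[simp] theorem pre_src (q : G.InfPath) (N : ℕ) : (pre q N).src = G.s (q.edges 0) := rfl

theorem pre_edges_get (q : G.InfPath) (N i : ℕ) (h : i < (pre q N).edges.length) :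
    (pre q N).edges.get ⟨i, h⟩ = q.edges i := by
  simp [pre]

theorem pre_rng (q : G.InfPath) (N : ℕ) : (pre q N).rng = G.s (q.edges N) := by
  cases N with
  | zero => simp [FinPath.rng, pre]
  | succ n =>
    have hne : (pre q (n+1)).edges ≠ [] := by
      intro h
      have := congrArg List.length h
      simp at this
    rw [FinPath.rng, List.getLast?_eq_getLast hne, List.getLast_eq_getElem]
    simp only [Option.map_some, Option.getD_some]
    have hget : ∀ (j : ℕ) (hj : j < (pre q (n+1)).edges.length), j = n →
        G.r ((pre q (n+1)).edges.get ⟨j, hj⟩) = G.s (q.edges (n+1)) := by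
      intro j hj hjn
      subst hjn
      rw [pre_edges_get]
      exact q.chain _
    exact hget _ _ (by simp)

end DirGraph
namespace DirGraph

variable {G : DirGraph}

/-- Concatenation of a prefix with the corresponding tail. -/
theorem catPT (q : G.InfPath) (N : ℕ) : IsCat (pre q N) (mkB (tl q N)) (mkB q) := by
  refine ⟨by rw [pre_rng]; rfl, ?_⟩
  show (∀ (i : ℕ) (h : i < (pre q N).edges.length), q.edges i = (pre q N).edges.get ⟨i, h⟩) ∧
    (∀ i : ℕ, q.edges ((pre q N).edges.length + i) = (tl q N).edges i)
  constructor
  · intro i h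
    rw [pre_edges_get]
  · intro i
    rw [pre_edges_length]
    rfl

/-- Destructor for concatenations with infinite total path. -/
theorem isCat_mkB {μ : G.FinPath} {p : G.BPath} {q : G.InfPath}
    (h : IsCat μ p (mkB q)) :
    p = mkB (tl q μ.edges.length) ∧
      (∀ (i : ℕ) (hi : i < μ.edges.length), q.edges i = μ.edges.get ⟨i, hi⟩) := by
  obtain ⟨x, hx⟩ := p
  obtain ⟨h1, h2⟩ := h
  cases x with
  | inl f => exact absurd h2 (by intro h; exact h)
  | inr w =>
    obtain ⟨ha, hb⟩ : (∀ (i : ℕ) (hi : i < μ.edges.length), q.edges i = μ.edges.get ⟨i, hi⟩) ∧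
        (∀ i : ℕ, q.edges (μ.edges.length + i) = w.edges i) := h2
    refine ⟨?_, ha⟩
    apply Subtype.ext
    show Sum.inr w = Sum.inr (tl q μ.edges.length)
    congr 1
    apply InfPath.ext'
    funext i
    exact (hb i).symm

theorem isCat_src_eq {μ : G.FinPath} {p : G.BPath} {q : G.InfPath}
    (h : IsCat μ p (mkB q)) : μ.src = G.s (q.edges 0) := by
  rcases Nat.eq_zero_or_pos μ.edges.length with h0 | h0
  · have h1 := h.1
    have hp := (isCat_mkB h).1
    rw [hp] at h1
    have he : μ.edges = [] := List.length_eq_zero_iff.mp h0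
    rw [FinPath.rng, he] at h1
    simpa [mkB_src, h0] using h1
  · have := (isCat_mkB h).2 0 h0
    have hsrc := μ.src_eq (μ.edges.get ⟨0, h0⟩) (by
      rw [List.head?_eq_head (List.length_pos_iff.mp h0)]
      exact congrArg some (List.get_mk_zero h0).symm)
    rw [← hsrc, this]

/-- Infiniteness propagates. -/
theorem isCat_infinite {μ : G.FinPath} {p x : G.BPath}
    (h : IsCat μ p x) (hx : x.IsInfinite) : p.IsInfinite := by
  obtain ⟨q, rfl⟩ := eq_mkB_of_isInfinite hx
  rw [(isCat_mkB h).1]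
  exact mkB_isInfinite _

theorem isCat_infinite' {μ : G.FinPath} {p x : G.BPath}
    (h : IsCat μ p x) (hp : p.IsInfinite) : x.IsInfinite := by
  obtain ⟨q, hq⟩ := hp
  obtain ⟨xx, hx⟩ := x
  cases xx with
  | inr w => exact ⟨w, rfl⟩
  | inl f =>
    exfalso
    have h2 := h.2
    rw [hq] at h2
    exact h2

/-- Composition of concatenations (existence form). -/
theorem cat_comp {μ τ : G.FinPath} {p w x : G.BPath}
    (h1 : IsCat μ p x) (h2 : IsCat τ w p) (hx : x.IsInfinite) :
    ∃ σ : G.FinPath, σ.edges.length = μ.edges.length + τ.edges.length ∧ IsCat σ w x := by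
  obtain ⟨q, rfl⟩ := eq_mkB_of_isInfinite hx
  have hp := (isCat_mkB h1).1
  rw [hp] at h2
  have hw := (isCat_mkB h2).1
  rw [tl_tl] at hw
  refine ⟨pre q (μ.edges.length + τ.edges.length), by simp, ?_⟩
  have := catPT q (μ.edges.length + τ.edges.length)
  rwa [← hw] at this

theorem tailEqLag_symm {x y : G.BPath} {k : ℤ} (h : TailEqLag x y k) : TailEqLag y x (-k) := by
  obtain ⟨μ, ν, p, h1, h2, h3⟩ := h
  exact ⟨ν, μ, p, h2, h1, by omega⟩

theorem tailEqLag_trans {x y z : G.BPath} {k l : ℤ}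
    (h1 : TailEqLag x y k) (h2 : TailEqLag y z l) (hz : z.IsInfinite) :
    TailEqLag x z (k + l) := by
  obtain ⟨μ₂, ν₂, p₂, hc, hd, he⟩ := h2
  have hp₂ : p₂.IsInfinite := isCat_infinite hd hz
  have hy : y.IsInfinite := isCat_infinite' hc hp₂
  obtain ⟨qy, rfl⟩ := eq_mkB_of_isInfinite hy
  obtain ⟨μ₁, ν₁, p₁, ha, hb, hlag⟩ := h1
  have hx : x.IsInfinite := isCat_infinite' ha (isCat_infinite hb (mkB_isInfinite qy))
  -- p₁ = tl qy s₁, p₂ = tl qy t₂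
  set s₁ := ν₁.edges.length with hs₁
  set t₂ := μ₂.edges.length with ht₂
  have hp1 := (isCat_mkB hb).1
  have hp2 := (isCat_mkB hc).1
  set D := max s₁ t₂ with hD
  -- x = σ₁ (tl qy D)
  have hcat1 : IsCat (pre (tl qy s₁) (D - s₁)) (mkB (tl qy D)) (mkB (tl qy s₁)) := by
    have := catPT (tl qy s₁) (D - s₁)
    rwa [tl_tl, Nat.add_sub_cancel' (Nat.le_max_left _ _)] at this
  obtain ⟨σ₁, hσ₁len, hσ₁⟩ := cat_comp ha (by rw [hp1]; exact hcat1) hx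
  -- z = σ₂ (tl qy D)
  have hcat2 : IsCat (pre (tl qy t₂) (D - t₂)) (mkB (tl qy D)) (mkB (tl qy t₂)) := by
    have := catPT (tl qy t₂) (D - t₂)
    rwa [tl_tl, Nat.add_sub_cancel' (Nat.le_max_right _ _)] at this
  obtain ⟨σ₂, hσ₂len, hσ₂⟩ := cat_comp hd (by rw [hp2]; exact hcat2) hz
  refine ⟨σ₁, σ₂, mkB (tl qy D), hσ₁, hσ₂, ?_⟩
  have l1 : (σ₁.length : ℤ) = μ₁.edges.length + (D - s₁ : ℕ) := by
    rw [FinPath.length, hσ₁len, pre_edges_length]; push_cast; ring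
  have l2 : (σ₂.length : ℤ) = ν₂.edges.length + (D - t₂ : ℕ) := by
    rw [FinPath.length, hσ₂len, pre_edges_length]; push_cast; ring
  have c1 : ((D - s₁ : ℕ) : ℤ) = (D : ℕ) - (s₁ : ℕ) := by
    rw [Nat.cast_sub (Nat.le_max_left _ _)]
  have c2 : ((D - t₂ : ℕ) : ℤ) = (D : ℕ) - (t₂ : ℕ) := by
    rw [Nat.cast_sub (Nat.le_max_right _ _)]
  have hlag' : (μ₁.edges.length : ℤ) - (ν₁.edges.length : ℤ) = k := hlag
  have he' : (μ₂.edges.length : ℤ) - (ν₂.edges.length : ℤ) = l := he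
  rw [l1, l2, c1, c2]
  omega

end DirGraph
namespace DirGraph

variable {G : DirGraph}

/-- Prepending an edge to an infinite path. -/
def consE (e : G.E) (q : G.InfPath) (h : G.r e = G.s (q.edges 0)) : G.InfPath :=
  ⟨fun i => match i with | 0 => e | (j+1) => q.edges j, by
    intro i
    match i with
    | 0 => exact h
    | (j+1) => exact q.chain j⟩

@[simp] theorem consE_edges_zero (e : G.E) (q : G.InfPath) (h) :
    (consE e q h).edges 0 = e := rfl

@[simp] theorem consE_edges_succ (e : G.E) (q : G.InfPath) (h) (i : ℕ) :
    (consE e q h).edges (i + 1) = q.edges i := rfl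

theorem isCat_vertex (q : G.InfPath) :
    IsCat (vertexPath G (G.s (q.edges 0))) (mkB q) (mkB q) := by
  refine ⟨rfl, ?_⟩
  show (∀ (i : ℕ) (h : i < ([] : List G.E).length), q.edges i = [].get ⟨i, h⟩) ∧
    (∀ i : ℕ, q.edges (([] : List G.E).length + i) = q.edges i)
  exact ⟨fun i h => absurd h (by simp), fun i => by simp⟩

theorem isCat_singleE (e : G.E) (q : G.InfPath) (h : G.r e = G.s (q.edges 0)) :
    IsCat (singleE G e) (mkB q) (mkB (consE e q h)) := by
  refine ⟨?_, ?_⟩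
  · show (singleE G e).rng = G.s (q.edges 0)
    rw [← h]
    rfl
  · show (∀ (i : ℕ) (hi : i < [e].length), (consE e q h).edges i = [e].get ⟨i, hi⟩) ∧
      (∀ i : ℕ, (consE e q h).edges ([e].length + i) = q.edges i)
    constructor
    · intro i hi
      have hi0 : i = 0 := by simpa using hi
      subst hi0
      rfl
    · intro i
      show (consE e q h).edges (1 + i) = q.edges i
      rw [Nat.add_comm]
      rfl

@[simp] theorem vertexPath_length (v : G.V) : (vertexPath G v).length = 0 := rfl
@[simp] theorem singleE_length (e : G.E) : (singleE G e).length = 1 := rfl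
@[simp] theorem vertexPath_rng (v : G.V) : (vertexPath G v).rng = v := rfl
@[simp] theorem singleE_rng (e : G.E) : (singleE G e).rng = G.r e := rfl

/-- The lag of `cons e q` over `q` is `1`. -/
theorem tailEqLag_cons (e : G.E) (q : G.InfPath) (h : G.r e = G.s (q.edges 0)) :
    TailEqLag (mkB (consE e q h)) (mkB q) 1 := by
  refine ⟨singleE G e, vertexPath G (G.s (q.edges 0)), mkB q,
    isCat_singleE e q h, isCat_vertex q, ?_⟩
  simp

/-- The lag of a tail. -/
theorem tailEqLag_tl (q : G.InfPath) (N : ℕ) :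
    TailEqLag (mkB (tl q N)) (mkB q) (-(N : ℤ)) := by
  refine ⟨vertexPath G (G.s ((tl q N).edges 0)), pre q N, mkB (tl q N),
    isCat_vertex (tl q N), catPT q N, ?_⟩
  simp

end DirGraph
namespace DirGraph

variable {G : DirGraph} {K : Type} [Field K]

theorem lpa_rel {x y : FreeAlgebra K (Gen G)} (h : LRel G K x y) :
    RingQuot.mkAlgHom K (LRel G K) x = RingQuot.mkAlgHom K (LRel G K) y :=
  RingQuot.mkAlgHom_rel K h

theorem ofV_mul_ofV (v : G.V) : ofV G K v * ofV G K v = ofV G K v := by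
  simp only [ofV, ← map_mul]; exact lpa_rel (LRel.vv_eq v)

theorem ofE_mul_ofV (e : G.E) : ofE G K e * ofV G K (G.r e) = ofE G K e := by
  simp only [ofE, ofV, ← map_mul]; exact lpa_rel (LRel.e1r e)

theorem ofV_mul_ofE (e : G.E) : ofV G K (G.s e) * ofE G K e = ofE G K e := by
  simp only [ofE, ofV, ← map_mul]; exact lpa_rel (LRel.e1l e)

theorem ofG_mul_ofV (e : G.E) : ofG G K e * ofV G K (G.s e) = ofG G K e := by
  simp only [ofG, ofV, ← map_mul]; exact lpa_rel (LRel.e2r e)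

theorem ofV_mul_ofG (e : G.E) : ofV G K (G.r e) * ofG G K e = ofG G K e := by
  simp only [ofG, ofV, ← map_mul]; exact lpa_rel (LRel.e2l e)

theorem genV (v : G.V) :
    pathElem G K (vertexPath G v) * pathStarElem G K (vertexPath G v) = ofV G K v := by
  show (ofV G K v * (([] : List G.E).map (ofE G K)).prod) *
    ((([] : List G.E).reverse.map (ofG G K)).prod * ofV G K v) = ofV G K v
  simp only [List.map_nil, List.prod_nil, List.reverse_nil, mul_one, one_mul]
  exact ofV_mul_ofV v

theorem genE (e : G.E) :
    pathElem G K (singleE G e) * pathStarElem G K (vertexPath G (G.r e)) = ofE G K e := by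
  show (ofV G K (G.s e) * ([e].map (ofE G K)).prod) *
    ((([] : List G.E).reverse.map (ofG G K)).prod * ofV G K (G.r e)) = ofE G K e
  simp only [List.map_cons, List.map_nil, List.prod_cons, List.prod_nil, List.reverse_nil,
    mul_one, one_mul]
  rw [mul_assoc, ofE_mul_ofV, ofV_mul_ofE]

theorem genG (e : G.E) :
    pathElem G K (vertexPath G (G.r e)) * pathStarElem G K (singleE G e) = ofG G K e := by
  show (ofV G K (G.r e) * (([] : List G.E).map (ofE G K)).prod) *
    (([e].reverse.map (ofG G K)).prod * ofV G K (G.s e)) = ofG G K e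
  simp only [List.map_cons, List.map_nil, List.prod_cons, List.prod_nil,
    List.reverse_cons, List.reverse_nil, List.nil_append, mul_one, one_mul]
  rw [ofG_mul_ofV, ofV_mul_ofG]

end DirGraph
namespace DirGraph

variable {G : DirGraph} {K : Type} [Field K]

theorem lset_tailEqLag {x : G.BPath} (yk : Lset G x) :
    TailEqLag (yk : G.BPath × ℤ).1 x (yk : G.BPath × ℤ).2 := yk.prop

theorem lset_infinite {x : G.BPath} (hx : x.IsInfinite) (yk : Lset G x) :
    (yk : G.BPath × ℤ).1.IsInfinite := by
  obtain ⟨μ, ν, p, h1, h2, _⟩ := lset_tailEqLag yk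
  exact isCat_infinite' h1 (isCat_infinite h2 hx)

/-- Projections `ν ν^*` act on basis elements by keeping or killing them. -/
theorem spec_proj {x : G.BPath} {ρ : LPA G K →ₐ[K] Module.End K (KLCarrier G K x)}
    (hρ : KLSpec G K x ρ) (ν : G.FinPath) (yk : Lset G x) :
    ρ (pathElem G K ν * pathStarElem G K ν) (Finsupp.single yk 1) =
      if ∃ p, IsCat ν p (yk : G.BPath × ℤ).1 then Finsupp.single yk 1 else 0 := by
  split_ifs with h
  · obtain ⟨p, hp⟩ := h
    exact hρ.1 ν ν rfl yk yk p hp hp (by ring)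
  · exact hρ.2 ν ν rfl yk h

theorem spec_move {x : G.BPath} {ρ : LPA G K →ₐ[K] Module.End K (KLCarrier G K x)}
    (hρ : KLSpec G K x ρ) (yk zk : Lset G x)
    (h : TailEqLag (zk : G.BPath × ℤ).1 (yk : G.BPath × ℤ).1
      ((zk : G.BPath × ℤ).2 - (yk : G.BPath × ℤ).2)) :
    ∃ η, ρ η (Finsupp.single yk 1) = Finsupp.single zk 1 := by
  obtain ⟨μ, ν, p, h1, h2, h3⟩ := h
  refine ⟨pathElem G K μ * pathStarElem G K ν,
    hρ.1 μ ν ?_ yk zk p h2 h1 (by omega)⟩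
  rw [h1.1, h2.1]

theorem spec_actV {x : G.BPath} {ρ : LPA G K →ₐ[K] Module.End K (KLCarrier G K x)}
    (hρ : KLSpec G K x ρ) (v : G.V) (yk : Lset G x) (q : G.InfPath)
    (hq : (yk : G.BPath × ℤ).1 = mkB q) :
    ρ (ofV G K v) (Finsupp.single yk 1) =
      if G.s (q.edges 0) = v then Finsupp.single yk 1 else 0 := by
  rw [← genV]
  split_ifs with h
  · refine hρ.1 (vertexPath G v) (vertexPath G v) rfl yk yk (mkB q) ?_ ?_ (by simp) <;>
    · rw [hq, ← h]
      exact isCat_vertex q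
  · refine hρ.2 (vertexPath G v) (vertexPath G v) rfl yk ?_
    rintro ⟨p, hp⟩
    rw [hq] at hp
    apply h
    have h1 := hp.1
    rw [(isCat_mkB hp).1] at h1
    have : (mkB (tl q (vertexPath G v).edges.length)).src = G.s (q.edges 0) := by
      rw [mkB_src]
      show G.s (q.edges ((vertexPath G v).edges.length + 0)) = _
      norm_num
      rfl
    rw [this] at h1
    exact h1.symm

theorem spec_actE_mem {x : G.BPath} (hx : x.IsInfinite) (yk : Lset G x) (q : G.InfPath)
    (hq : (yk : G.BPath × ℤ).1 = mkB q) (e : G.E) (h : G.r e = G.s (q.edges 0)) :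
    (mkB (consE e q h), (yk : G.BPath × ℤ).2 + 1) ∈ Lset G x := by
  have h1 := tailEqLag_cons e q h
  have h2 := lset_tailEqLag yk
  rw [hq] at h2
  have := tailEqLag_trans h1 h2 hx
  show TailEqLag _ x _
  rw [show (yk : G.BPath × ℤ).2 + 1 = 1 + (yk : G.BPath × ℤ).2 by ring]
  exact this

theorem spec_actE {x : G.BPath} {ρ : LPA G K →ₐ[K] Module.End K (KLCarrier G K x)}
    (hx : x.IsInfinite) (hρ : KLSpec G K x ρ) (e : G.E) (yk : Lset G x) (q : G.InfPath)
    (hq : (yk : G.BPath × ℤ).1 = mkB q) (h : G.r e = G.s (q.edges 0)) :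
    ρ (ofE G K e) (Finsupp.single yk 1) =
      Finsupp.single (⟨(mkB (consE e q h), (yk : G.BPath × ℤ).2 + 1),
        spec_actE_mem hx yk q hq e h⟩ : Lset G x) 1 := by
  rw [← genE]
  refine hρ.1 (singleE G e) (vertexPath G (G.r e)) (by simp) yk _ (mkB q) ?_ ?_ ?_
  · rw [hq, h]
    exact isCat_vertex q
  · exact isCat_singleE e q h
  · show ((yk : G.BPath × ℤ).2 + 1) = (yk : G.BPath × ℤ).2 + ((1:ℕ) : ℤ) - ((0:ℕ) : ℤ)
    norm_num

theorem spec_actE_zero {x : G.BPath} {ρ : LPA G K →ₐ[K] Module.End K (KLCarrier G K x)}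
    (hρ : KLSpec G K x ρ) (e : G.E) (yk : Lset G x) (q : G.InfPath)
    (hq : (yk : G.BPath × ℤ).1 = mkB q) (h : G.r e ≠ G.s (q.edges 0)) :
    ρ (ofE G K e) (Finsupp.single yk 1) = 0 := by
  rw [← genE]
  refine hρ.2 (singleE G e) (vertexPath G (G.r e)) (by simp) yk ?_
  rintro ⟨p, hp⟩
  rw [hq] at hp
  apply h
  have h1 := hp.1
  rw [(isCat_mkB hp).1] at h1
  have : (mkB (tl q (vertexPath G (G.r e)).edges.length)).src = G.s (q.edges 0) := by
    rw [mkB_src]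
    show G.s (q.edges ((vertexPath G (G.r e)).edges.length + 0)) = _
    norm_num
    rfl
  rw [this] at h1
  exact h1

theorem spec_actG_mem {x : G.BPath} (hx : x.IsInfinite) (yk : Lset G x) (q : G.InfPath)
    (hq : (yk : G.BPath × ℤ).1 = mkB q) :
    (mkB (tl q 1), (yk : G.BPath × ℤ).2 - 1) ∈ Lset G x := by
  have h1 := tailEqLag_tl q 1
  have h2 := lset_tailEqLag yk
  rw [hq] at h2
  have := tailEqLag_trans h1 h2 hx
  show TailEqLag _ x _
  rw [show (yk : G.BPath × ℤ).2 - 1 = -((1:ℕ) : ℤ) + (yk : G.BPath × ℤ).2 by push_cast; ring]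
  exact this

theorem mkB_eq_consE_tl (q : G.InfPath) (e : G.E) (he : q.edges 0 = e) :
    mkB q = mkB (consE e (tl q 1) (by
      rw [← he]
      show G.r (q.edges 0) = G.s (q.edges (1 + 0))
      rw [q.chain 0])) := by
  congr 1
  apply InfPath.ext'
  funext i
  cases i with
  | zero => exact he
  | succ j =>
    show q.edges (j + 1) = q.edges (1 + j)
    rw [Nat.add_comm]

theorem spec_actG {x : G.BPath} {ρ : LPA G K →ₐ[K] Module.End K (KLCarrier G K x)}
    (hx : x.IsInfinite) (hρ : KLSpec G K x ρ) (e : G.E) (yk : Lset G x) (q : G.InfPath)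
    (hq : (yk : G.BPath × ℤ).1 = mkB q) (h : q.edges 0 = e) :
    ρ (ofG G K e) (Finsupp.single yk 1) =
      Finsupp.single (⟨(mkB (tl q 1), (yk : G.BPath × ℤ).2 - 1),
        spec_actG_mem hx yk q hq⟩ : Lset G x) 1 := by
  rw [← genG]
  refine hρ.1 (vertexPath G (G.r e)) (singleE G e) (by simp) yk _ (mkB (tl q 1)) ?_ ?_ ?_
  · rw [hq, mkB_eq_consE_tl q e h]
    exact isCat_singleE e (tl q 1) _
  · have hv : G.r e = G.s ((tl q 1).edges 0) := by
      rw [← h]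
      show G.r (q.edges 0) = G.s (q.edges (1 + 0))
      rw [q.chain 0]
    rw [hv]
    exact isCat_vertex (tl q 1)
  · show ((yk : G.BPath × ℤ).2 - 1) = (yk : G.BPath × ℤ).2 + ((0:ℕ) : ℤ) - ((1:ℕ) : ℤ)
    norm_num

theorem spec_actG_zero {x : G.BPath} {ρ : LPA G K →ₐ[K] Module.End K (KLCarrier G K x)}
    (hρ : KLSpec G K x ρ) (e : G.E) (yk : Lset G x) (q : G.InfPath)
    (hq : (yk : G.BPath × ℤ).1 = mkB q) (h : q.edges 0 ≠ e) :
    ρ (ofG G K e) (Finsupp.single yk 1) = 0 := by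
  rw [← genG]
  refine hρ.2 (vertexPath G (G.r e)) (singleE G e) (by simp) yk ?_
  rintro ⟨p, hp⟩
  rw [hq] at hp
  apply h
  have := (isCat_mkB hp).2 0 (by simp [singleE])
  simpa [singleE] using this

end DirGraph
namespace DirGraph

variable {G : DirGraph} {K : Type} [Field K]

theorem FinPath.ext' {μ ν : G.FinPath} (h1 : μ.src = ν.src) (h2 : μ.edges = ν.edges) :
    μ = ν := by
  cases μ; cases ν; simp_all

theorem exists_cat_pre_iff {q₁ qy : G.InfPath} {N : ℕ} (hN : 1 ≤ N) :
    (∃ p, IsCat (pre q₁ N) p (mkB qy)) ↔ ∀ i < N, qy.edges i = q₁.edges i := by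
  constructor
  · rintro ⟨p, hp⟩ i hi
    have := (isCat_mkB hp).2 i (by simpa using hi)
    rw [this, pre_edges_get]
  · intro hag
    have hpre : pre q₁ N = pre qy N := by
      apply FinPath.ext'
      · simp only [pre_src]
        rw [hag 0 hN]
      · show List.ofFn (fun i : Fin N => q₁.edges i) = List.ofFn (fun i : Fin N => qy.edges i)
        congr 1
        funext i
        exact (hag i i.2).symm
    rw [hpre]
    exact ⟨_, catPT qy N⟩

/-- Membership in the grading component via supports. -/
theorem mem_KLgr_iff {x : G.BPath} {k : ℤ} {w : KLCarrier G K x} :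
    w ∈ KLgr G K x k ↔ ∀ yk ∈ w.support, (yk : G.BPath × ℤ).2 = k := by
  constructor
  · intro hw
    let S : Submodule K (KLCarrier G K x) :=
      { carrier := {w | ∀ yk ∈ w.support, (yk : G.BPath × ℤ).2 = k}
        zero_mem' := by simp
        add_mem' := by
          intro a b ha hb yk h
          rcases Finset.mem_union.mp (Finsupp.support_add h) with h' | h'
          · exact ha yk h'
          · exact hb yk h'
        smul_mem' := by
          intro c a ha yk h
          exact ha yk (Finsupp.support_smul h) }
    have hle : KLgr G K x k ≤ S := by
      rw [KLgr, Submodule.span_le]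
      rintro w' ⟨yk, hyk, rfl⟩
      intro zk hzk
      have := Finsupp.support_single_subset hzk
      simp only [Finset.mem_singleton] at this
      rw [this, hyk]
    exact hle hw
  · intro h
    have hw : w = ∑ a ∈ w.support, Finsupp.single a (w a) :=
      (Finsupp.sum_single w).symm
    rw [hw]
    apply Submodule.sum_mem
    intro a ha
    have : Finsupp.single a (w a) = (w a) • Finsupp.single a (1 : K) := by
      rw [Finsupp.smul_single, smul_eq_mul, mul_one]
    rw [this]
    exact Submodule.smul_mem _ _ (Submodule.subset_span ⟨a, h a ha, rfl⟩)

theorem single_mem_KLgr {x : G.BPath} {k : ℤ} (yk : Lset G x)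
    (h : (yk : G.BPath × ℤ).2 = k) :
    (Finsupp.single yk 1 : KLCarrier G K x) ∈ KLgr G K x k := by
  rw [mem_KLgr_iff]
  intro zk hzk
  have := Finsupp.support_single_subset hzk
  simp only [Finset.mem_singleton] at this
  rw [this, h]

end DirGraph
namespace DirGraph

section Periodic

variable {α : Type} (f : ℕ → α)

theorem per_mul {m : ℕ} (hm : ∀ i, f (i + m) = f i) (t : ℕ) :
    ∀ i, f (i + t * m) = f i := by
  induction t with
  | zero => simp
  | succ t IH =>
    intro i
    have : i + (t + 1) * m = (i + m) + t * m := by ring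
    rw [this, IH, hm]

theorem per_sub {m k : ℕ} (hm : ∀ i, f (i + m) = f i) (hk : ∀ i, f (i + k) = f i)
    (h : k ≤ m) : ∀ i, f (i + (m - k)) = f i := by
  intro i
  have h1 : f (i + (m - k) + k) = f (i + (m - k)) := hk _
  have h2 : i + (m - k) + k = i + m := by omega
  rw [h2] at h1
  rw [← h1, hm]

theorem per_gcd : ∀ (m k : ℕ), (∀ i, f (i + m) = f i) → (∀ i, f (i + k) = f i) →
    ∀ i, f (i + Nat.gcd m k) = f i := by
  intro m
  induction m using Nat.strong_induction_on with
  | _ m IH =>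
    intro k hm hk
    match m, hm, IH with
    | 0, hm, IH => simpa [Nat.gcd_zero_left] using hk
    | (m+1), hm, IH =>
      rw [Nat.gcd_rec]
      refine IH (k % (m+1)) (Nat.mod_lt _ (Nat.succ_pos m)) (m+1) ?_ hm
      have hdiv := Nat.mod_add_div k (m+1)
      have hcomm : (m+1) * (k / (m+1)) = (k / (m+1)) * (m+1) := Nat.mul_comm _ _
      have hmod : k % (m+1) = k - (k / (m+1)) * (m+1) := by omega
      rw [hmod]
      exact per_sub f hk (per_mul f hm (k / (m+1))) (Nat.div_mul_le_self _ _)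

theorem per_mod {g : ℕ} (hg : ∀ i, f (i + g) = f i) (i : ℕ) : f i = f (i % g) := by
  have h1 := per_mul f hg (i / g) (i % g)
  have h2 : i % g + i / g * g = i := Nat.mod_add_div' i g
  rw [h2] at h1
  exact h1

end Periodic

section ListRep

variable {α : Type}

theorem length_flatten_replicate (m : ℕ) (l : List α) :
    (List.replicate m l).flatten.length = m * l.length := by
  induction m with
  | zero => simp
  | succ t IH =>
    rw [List.replicate_succ, List.flatten_cons, List.length_append, IH]
    ring

theorem getElem_flatten_replicate (m : ℕ) (l : List α) (hl : l ≠ []) (i : ℕ)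
    (h : i < (List.replicate m l).flatten.length) :
    (List.replicate m l).flatten[i] =
      l[i % l.length]'(Nat.mod_lt _ (List.length_pos_iff.mpr hl)) := by
  induction m generalizing i with
  | zero => simp at h
  | succ t IH =>
    simp only [List.replicate_succ, List.flatten_cons] at h ⊢
    rcases lt_or_ge i l.length with hi | hi
    · rw [List.getElem_append_left hi]
      congr 1
      exact (Nat.mod_eq_of_lt hi).symm
    · rw [List.getElem_append_right hi]
      rw [IH (i - l.length) (by rw [List.length_append] at h; omega)]
      congr 1
      conv_rhs => rw [show i = (i - l.length) + l.length by omega]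
      rw [Nat.add_mod_right]

end ListRep

end DirGraph
namespace DirGraph

variable {G : DirGraph}

theorem closed_cat_infinite {c : G.FinPath} {p : G.BPath} (hc : 0 < c.length)
    (hp : IsCat c p p) : p.IsInfinite := by
  rcases h : p.1 with f | q
  · exfalso
    have h2 := hp.2
    rw [h] at h2
    obtain ⟨-, h3⟩ : f.src = c.src ∧ f.edges = c.edges ++ f.edges := h2
    have := congrArg List.length h3
    rw [List.length_append] at this
    have hc' : 0 < c.edges.length := hc
    omega
  · exact ⟨q, h⟩

theorem closed_cat_spec {c : G.FinPath} {q₀ : G.InfPath}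
    (hp : IsCat c (mkB q₀) (mkB q₀)) :
    (∀ (i : ℕ) (hi : i < c.edges.length), q₀.edges i = c.edges.get ⟨i, hi⟩) ∧
      (∀ i, q₀.edges (i + c.edges.length) = q₀.edges i) := by
  obtain ⟨h1, h2⟩ := isCat_mkB hp
  refine ⟨h2, ?_⟩
  intro i
  have h3 := mkB_inj h1.symm
  have := congrArg (fun w => w.edges i) h3
  simp only [tl_edges] at this
  rw [Nat.add_comm] at this
  exact this

theorem tl_mul_eq {q₀ : G.InfPath} {n : ℕ}
    (hper : ∀ i, q₀.edges (i + n) = q₀.edges i) (t : ℕ) : tl q₀ (t * n) = q₀ := by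
  apply InfPath.ext'
  funext i
  show q₀.edges (t * n + i) = q₀.edges i
  rw [Nat.add_comm]
  exact per_mul _ hper t i

theorem lag_self_nat {q₀ : G.InfPath} {n : ℕ}
    (hper : ∀ i, q₀.edges (i + n) = q₀.edges i) (t : ℕ) :
    TailEqLag (mkB q₀) (mkB q₀) ((t * n : ℕ) : ℤ) := by
  refine ⟨pre q₀ (t * n), vertexPath G (G.s (q₀.edges 0)), mkB q₀, ?_, isCat_vertex q₀, ?_⟩
  · have := catPT q₀ (t * n)
    rwa [tl_mul_eq hper t] at this
  · simp

theorem lag_self_int {q₀ : G.InfPath} {n : ℕ}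
    (hper : ∀ i, q₀.edges (i + n) = q₀.edges i) (d : ℤ) (hd : (n : ℤ) ∣ d) :
    TailEqLag (mkB q₀) (mkB q₀) d := by
  obtain ⟨j, rfl⟩ := hd
  rcases le_or_gt 0 j with hj | hj
  · have : (n : ℤ) * j = ((j.toNat * n : ℕ) : ℤ) := by
      push_cast
      rw [Int.toNat_of_nonneg hj]
      ring
    rw [this]
    exact lag_self_nat hper j.toNat
  · have : (n : ℤ) * j = -(((-j).toNat * n : ℕ) : ℤ) := by
      push_cast
      rw [Int.toNat_of_nonneg (by omega : (0:ℤ) ≤ -j)]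
      ring
    rw [this]
    exact tailEqLag_symm (lag_self_nat hper (-j).toNat)

theorem full_period {q₀ : G.InfPath} {n : ℕ} (hn : 0 < n)
    (hper : ∀ i, q₀.edges (i + n) = q₀.edges i) {a b : ℕ} (hba : b ≤ a)
    (hab : ∀ i, q₀.edges (a + i) = q₀.edges (b + i)) :
    ∀ i, q₀.edges (i + (a - b)) = q₀.edges i := by
  have key : ∀ j, b ≤ j → q₀.edges (j + (a - b)) = q₀.edges j := by
    intro j hj
    have h1 := hab (j - b)
    have e1 : a + (j - b) = j + (a - b) := by omega
    have e2 : b + (j - b) = j := by omega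
    rw [e1, e2] at h1
    exact h1
  intro i
  have h2 := per_mul _ hper b (i + (a - b))
  have h3 := per_mul _ hper b i
  rw [← h3, ← h2]
  have e3 : i + (a - b) + b * n = (i + b * n) + (a - b) := by ring
  rw [e3]
  exact key _ (by nlinarith)

theorem simple_closed_dvd {c : G.FinPath} (hc : c.IsSimpleClosed) {q₀ : G.InfPath}
    (hpre : ∀ (i : ℕ) (hi : i < c.edges.length), q₀.edges i = c.edges.get ⟨i, hi⟩)
    (hper : ∀ i, q₀.edges (i + c.edges.length) = q₀.edges i)
    (hsrc : c.src = G.s (q₀.edges 0))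
    {a b : ℕ} (hba : b ≤ a) (hab : ∀ i, q₀.edges (a + i) = q₀.edges (b + i)) :
    c.edges.length ∣ (a - b) := by
  set n := c.edges.length with hn'
  have hn : 0 < n := hc.1.1
  set d := a - b with hd'
  rcases Nat.eq_zero_or_pos d with h0 | h0
  · simp [h0]
  have hfull : ∀ i, q₀.edges (i + d) = q₀.edges i := full_period hn hper hba hab
  by_contra hndvd
  set g := Nat.gcd n d with hg'
  have hgper : ∀ i, q₀.edges (i + g) = q₀.edges i := per_gcd _ n d hper hfull
  have hgdvdn : g ∣ n := Nat.gcd_dvd_left n d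
  have hgdvdd : g ∣ d := Nat.gcd_dvd_right n d
  have hgpos : 0 < g := Nat.gcd_pos_of_pos_left _ hn
  have hglt : g < n := by
    rcases Nat.lt_or_ge g n with h | h
    · exact h
    · exfalso
      have : g = n := Nat.le_antisymm (Nat.le_of_dvd hn hgdvdn) h
      rw [this] at hgdvdd
      exact hndvd hgdvdd
  apply hc.2
  obtain ⟨t, hnt⟩ := hgdvdn
  have ht2 : 2 ≤ t := by
    rcases t with _ | _ | t
    · rw [Nat.mul_zero] at hnt; omega
    · rw [Nat.mul_one] at hnt; omega
    · omega
  refine ⟨pre q₀ g, t, ht2, ⟨?_, ?_⟩, ?_, ?_⟩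
  · show 0 < (pre q₀ g).edges.length
    simpa using hgpos
  · rw [pre_rng]
    show _ = (pre q₀ g).src
    rw [pre_src]
    congr 1
    have := hgper 0
    simpa using this
  · rw [pre_src, hsrc]
  · apply List.ext_getElem
    · rw [length_flatten_replicate]
      simp only [pre_edges_length]
      rw [show c.edges.length = g * t from hnt, Nat.mul_comm]
    · intro i h1 h2
      have hi : i < n := h1
      have hlhs : c.edges[i] = q₀.edges i := by
        have := hpre i hi
        rw [List.get_eq_getElem] at this
        exact this.symm
      rw [hlhs]
      have hnil : (pre q₀ g).edges ≠ [] := by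
        intro h
        have := congrArg List.length h
        simp at this
        omega
      rw [getElem_flatten_replicate t _ hnil i h2]
      have hj' : i % (pre q₀ g).edges.length < (pre q₀ g).edges.length :=
        Nat.mod_lt _ (by simpa using hgpos)
      have hpg := pre_edges_get q₀ g (i % (pre q₀ g).edges.length) hj'
      rw [List.get_eq_getElem] at hpg
      rw [hpg]
      have : ∀ j, j = i % g → q₀.edges i = q₀.edges j := by
        rintro j rfl
        exact per_mod _ hgper i
      exact this _ (by rw [pre_edges_length])

theorem lag_self_dvd {c : G.FinPath} (hc : c.IsSimpleClosed) {q₀ : G.InfPath}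
    (hpre : ∀ (i : ℕ) (hi : i < c.edges.length), q₀.edges i = c.edges.get ⟨i, hi⟩)
    (hper : ∀ i, q₀.edges (i + c.edges.length) = q₀.edges i)
    (hsrc : c.src = G.s (q₀.edges 0))
    {d : ℤ} (h : TailEqLag (mkB q₀) (mkB q₀) d) : (c.edges.length : ℤ) ∣ d := by
  obtain ⟨μ, ν, p, h1, h2, h3⟩ := h
  set a := μ.edges.length with ha'
  set b := ν.edges.length with hb'
  have hp1 := (isCat_mkB h1).1
  have hp2 := (isCat_mkB h2).1
  have heq : tl q₀ a = tl q₀ b := mkB_inj (hp1.symm.trans hp2)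
  have hab : ∀ i, q₀.edges (a + i) = q₀.edges (b + i) := by
    intro i
    exact congrArg (fun w => w.edges i) heq
  have h3' : (a : ℤ) - (b : ℤ) = d := h3
  rcases le_or_gt b a with hba | hba
  · have := simple_closed_dvd hc hpre hper hsrc hba hab
    have hcast : ((a - b : ℕ) : ℤ) = d := by omega
    rw [← hcast]
    exact Int.natCast_dvd_natCast.mpr this
  · have := simple_closed_dvd hc hpre hper hsrc (le_of_lt hba) (fun i => (hab i).symm)
    have hcast : ((b - a : ℕ) : ℤ) = -d := by omega
    have : (c.edges.length : ℤ) ∣ ((b - a : ℕ) : ℤ) := Int.natCast_dvd_natCast.mpr this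
    rw [hcast] at this
    exact (dvd_neg).mp this

end DirGraph
namespace DirGraph

variable {G : DirGraph} {K : Type} [Field K]

theorem single_eq_smul {x : G.BPath} (a : Lset G x) (b : K) :
    (Finsupp.single a b : KLCarrier G K x) = b • Finsupp.single a 1 := by
  rw [Finsupp.smul_single, smul_eq_mul, mul_one]

theorem proj_eq_sum {x : G.BPath} {ρ : LPA G K →ₐ[K] Module.End K (KLCarrier G K x)}
    (hρ : KLSpec G K x ρ) (ν : G.FinPath) (w : KLCarrier G K x) :
    ρ (pathElem G K ν * pathStarElem G K ν) w =
      ∑ a ∈ w.support, if ∃ p, IsCat ν p (a : G.BPath × ℤ).1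
        then Finsupp.single a (w a) else 0 := by
  conv_lhs => rw [← Finsupp.sum_single w]
  rw [Finsupp.sum]
  rw [map_sum]
  apply Finset.sum_congr rfl
  intro a ha
  rw [single_eq_smul, map_smul, spec_proj hρ]
  split_ifs with h
  · rw [← single_eq_smul]
  · rw [smul_zero]

theorem eq_top_of_singles {x : G.BPath} (P : Submodule K (KLCarrier G K x))
    (h : ∀ a : Lset G x, Finsupp.single a 1 ∈ P) : P = ⊤ := by
  rw [Submodule.eq_top_iff']
  intro w
  have hw : w = ∑ a ∈ w.support, Finsupp.single a (w a) := (Finsupp.sum_single w).symm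
  rw [hw]
  apply Submodule.sum_mem
  intro a _
  rw [single_eq_smul]
  exact Submodule.smul_mem _ _ (h a)

theorem supp_prefix {x : G.BPath} {ρ : LPA G K →ₐ[K] Module.End K (KLCarrier G K x)}
    (hρ : KLSpec G K x ρ) (ν : G.FinPath) (w : KLCarrier G K x)
    (hfix : ρ (pathElem G K ν * pathStarElem G K ν) w = w) :
    ∀ a ∈ w.support, ∃ p, IsCat ν p (a : G.BPath × ℤ).1 := by
  intro a ha
  by_contra h
  rw [proj_eq_sum hρ ν w] at hfix
  have h2 := congrArg (fun u : KLCarrier G K x => u a) hfix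
  rw [Finsupp.finset_sum_apply] at h2
  have h3 : ∀ b ∈ w.support,
      (if ∃ p, IsCat ν p (b : G.BPath × ℤ).1 then Finsupp.single b (w b) else 0) a = 0 := by
    intro b hb
    split_ifs with hcond
    · rcases eq_or_ne b a with rfl | hba
      · exact absurd hcond h
      · exact Finsupp.single_eq_of_ne' hba
    · rfl
  rw [Finset.sum_eq_zero h3] at h2
  exact Finsupp.mem_support_iff.mp ha h2.symm

/-- Extraction of a basis vector from a nonzero homogeneous element of an invariant
submodule. -/
theorem extract_single {x : G.BPath} {ρ : LPA G K →ₐ[K] Module.End K (KLCarrier G K x)}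
    (hx : x.IsInfinite) (hρ : KLSpec G K x ρ)
    (P : Submodule K (KLCarrier G K x)) (hinv : ∀ η : LPA G K, ∀ w ∈ P, ρ η w ∈ P)
    (z : KLCarrier G K x) (hz : z ∈ P) (hz0 : z ≠ 0) {k : ℤ}
    (hk : ∀ a ∈ z.support, (a : G.BPath × ℤ).2 = k) :
    ∃ yk : Lset G x, Finsupp.single yk 1 ∈ P := by
  obtain ⟨yk₁, hyk₁⟩ := Finset.nonempty_iff_ne_empty.mpr
    (fun h => hz0 (Finsupp.support_eq_empty.mp h))
  obtain ⟨q₁, hq₁⟩ := eq_mkB_of_isInfinite (lset_infinite hx yk₁)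
  classical
  set bed : Lset G x → ℕ → G.E := fun a i =>
    Sum.elim (fun _ => q₁.edges i) (fun q => q.edges i) (a : G.BPath × ℤ).1.1 with hbed
  have hbed_eq : ∀ (a : Lset G x) (q : G.InfPath), (a : G.BPath × ℤ).1 = mkB q →
      ∀ i, bed a i = q.edges i := by
    intro a q hq i
    have : (a : G.BPath × ℤ).1.1 = Sum.inr q := by rw [hq]; rfl
    simp [hbed, this]
  set N : ℕ := 1 + z.support.sup (fun a =>
    if h : ∃ j, bed a j ≠ q₁.edges j then Nat.find h else 0) with hN
  have hN1 : 1 ≤ N := by omega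
  have key : ∀ a ∈ z.support, (∃ p, IsCat (pre q₁ N) p (a : G.BPath × ℤ).1) ↔ a = yk₁ := by
    intro a ha
    constructor
    · intro hex
      obtain ⟨q, hq⟩ := eq_mkB_of_isInfinite (lset_infinite hx a)
      rw [hq] at hex
      have hag := (exists_cat_pre_iff hN1).mp hex
      have hall : ∀ i, q.edges i = q₁.edges i := by
        intro i
        by_contra hne
        have hj : ∃ j, bed a j ≠ q₁.edges j := ⟨i, by rw [hbed_eq a q hq]; exact hne⟩
        have hfind : Nat.find hj < N := by
          have hle : (if h : ∃ j, bed a j ≠ q₁.edges j then Nat.find h else 0) ≤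
              z.support.sup (fun a =>
                if h : ∃ j, bed a j ≠ q₁.edges j then Nat.find h else 0) :=
            Finset.le_sup (f := fun a =>
              if h : ∃ j, bed a j ≠ q₁.edges j then Nat.find h else 0) ha
          rw [dif_pos hj] at hle
          omega
        have := Nat.find_spec hj
        rw [hbed_eq a q hq] at this
        exact this (hag _ hfind)
      apply Subtype.ext
      apply Prod.ext
      · rw [hq, hq₁]
        congr 1
        exact InfPath.ext' (funext hall)
      · rw [hk a ha, hk yk₁ hyk₁]
    · rintro rfl
      rw [hq₁]
      exact (exists_cat_pre_iff hN1).mpr (fun i _ => rfl)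
  refine ⟨yk₁, ?_⟩
  have hTz := proj_eq_sum hρ (pre q₁ N) z
  have hsum : ∑ a ∈ z.support, (if ∃ p, IsCat (pre q₁ N) p (a : G.BPath × ℤ).1
      then Finsupp.single a (z a) else 0) = Finsupp.single yk₁ (z yk₁) := by
    rw [Finset.sum_eq_single yk₁]
    · rw [if_pos ((key yk₁ hyk₁).mpr rfl)]
    · intro b hb hbne
      rw [if_neg (fun hc => hbne ((key b hb).mp hc))]
    · intro hy
      exact absurd hyk₁ hy
  have hmem : Finsupp.single yk₁ (z yk₁) ∈ P := by
    rw [← hsum, ← hTz]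
    exact hinv _ z hz
  have hz1 : z yk₁ ≠ 0 := Finsupp.mem_support_iff.mp hyk₁
  have : Finsupp.single yk₁ (1 : K) = (z yk₁)⁻¹ • Finsupp.single yk₁ (z yk₁) := by
    rw [Finsupp.smul_single, smul_eq_mul, inv_mul_cancel₀ hz1]
  rw [this]
  exact Submodule.smul_mem _ _ hmem

end DirGraph
namespace DirGraph

variable {G : DirGraph} {K : Type} [Field K]

theorem lpa_induction (Q : LPA G K → Prop)
    (halg : ∀ r : K, Q (algebraMap K (LPA G K) r))
    (hV : ∀ v, Q (ofV G K v)) (hE : ∀ e, Q (ofE G K e)) (hGh : ∀ e, Q (ofG G K e))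
    (hmul : ∀ a b, Q a → Q b → Q (a * b)) (hadd : ∀ a b, Q a → Q b → Q (a + b)) :
    ∀ η, Q η := by
  intro η
  obtain ⟨y, rfl⟩ := RingQuot.mkAlgHom_surjective K (LRel G K) η
  induction y using FreeAlgebra.induction with
  | grade0 r => rw [AlgHom.commutes]; exact halg r
  | grade1 g =>
    cases g with
    | vtx v => exact hV v
    | edg e => exact hE e
    | ghd e => exact hGh e
  | mul a b ha hb => rw [map_mul]; exact hmul _ _ ha hb
  | add a b ha hb => rw [map_add]; exact hadd _ _ ha hb

end DirGraph
namespace DirGraph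

variable {G : DirGraph} {K : Type} [Field K]

/-- Part 1: graded simplicity. -/
theorem part1 {x : G.BPath} {ρ : LPA G K →ₐ[K] Module.End K (KLCarrier G K x)}
    (hx : x.IsInfinite) (hρ : KLSpec G K x ρ)
    (P : Submodule K (KLCarrier G K x)) (hinv : ∀ η : LPA G K, ∀ w ∈ P, ρ η w ∈ P)
    (hgr : GradedCarrier (fun k => KLgr G K x k) ↑P) (hPne : P ≠ ⊥) : P = ⊤ := by
  obtain ⟨w, hwP, hw0⟩ := Submodule.exists_mem_ne_zero_of_ne_bot hPne
  obtain ⟨l, hl, hsum⟩ := hgr w hwP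
  have hzex : ∃ z ∈ l, z ≠ 0 := by
    by_contra h
    push_neg at h
    apply hw0
    rw [← hsum]
    exact List.sum_eq_zero h
  obtain ⟨z, hzl, hz0⟩ := hzex
  obtain ⟨⟨hzP, k, hzk⟩⟩ := And.intro (hl z hzl) trivial
  have hk : ∀ a ∈ z.support, (a : G.BPath × ℤ).2 = k := mem_KLgr_iff.mp hzk
  obtain ⟨yk₁, hyk₁⟩ := extract_single hx hρ P hinv z hzP hz0 hk
  apply eq_top_of_singles
  intro zk
  have hlag : TailEqLag (zk : G.BPath × ℤ).1 (yk₁ : G.BPath × ℤ).1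
      ((zk : G.BPath × ℤ).2 - (yk₁ : G.BPath × ℤ).2) := by
    have := tailEqLag_trans (lset_tailEqLag zk) (tailEqLag_symm (lset_tailEqLag yk₁))
      (lset_infinite hx yk₁)
    rwa [← sub_eq_add_neg] at this
  obtain ⟨η, hη⟩ := spec_move hρ yk₁ zk hlag
  rw [← hη]
  exact hinv η _ hyk₁

/-- Part 2: an invariant submodule which is neither zero nor everything. -/
theorem part2 {x : G.BPath} {ρ : LPA G K →ₐ[K] Module.End K (KLCarrier G K x)}
    (hx : x.IsInfinite) (hρ : KLSpec G K x ρ) {n : ℕ} (hn : 0 < n)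
    (hshift : ∀ yk : Lset G x,
      ((yk : G.BPath × ℤ).1, (yk : G.BPath × ℤ).2 + n) ∈ Lset G x)
    (yk₀ : Lset G x) :
    ∃ P : Submodule K (KLCarrier G K x),
      (∀ η : LPA G K, ∀ w ∈ P, ρ η w ∈ P) ∧ P ≠ ⊥ ∧ P ≠ ⊤ := by
  classical
  set sh : Lset G x → Lset G x := fun yk =>
    ⟨((yk : G.BPath × ℤ).1, (yk : G.BPath × ℤ).2 + n), hshift yk⟩ with hsh
  set D : Set (KLCarrier G K x) :=
    {w | ∃ yk : Lset G x, w = Finsupp.single yk 1 - Finsupp.single (sh yk) 1} with hD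
  set P : Submodule K (KLCarrier G K x) := Submodule.span K D with hP
  have hfst : ∀ yk : Lset G x, ((sh yk : Lset G x) : G.BPath × ℤ).1 = (yk : G.BPath × ℤ).1 :=
    fun yk => rfl
  have hsnd : ∀ yk : Lset G x,
      ((sh yk : Lset G x) : G.BPath × ℤ).2 = (yk : G.BPath × ℤ).2 + n := fun yk => rfl
  -- invariance under the action of each generator, on D
  have hgen : ∀ η : LPA G K,
      (∀ yk : Lset G x, ρ η (Finsupp.single yk 1 - Finsupp.single (sh yk) 1) ∈ P) →
      ∀ w ∈ P, ρ η w ∈ P := by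
    intro η hbase w hw
    induction hw using Submodule.span_induction with
    | mem w hwD =>
      obtain ⟨yk, rfl⟩ := hwD
      exact hbase yk
    | zero => rw [map_zero]; exact Submodule.zero_mem _
    | add a b _ _ ha hb => rw [map_add]; exact Submodule.add_mem _ ha hb
    | smul c a _ ha => rw [map_smul]; exact Submodule.smul_mem _ _ ha
  refine ⟨P, ?_, ?_, ?_⟩
  · -- invariance under all of the algebra
    apply lpa_induction (fun η => ∀ w ∈ P, ρ η w ∈ P)
    · intro r w hw
      rw [AlgHom.commutes, Module.algebraMap_end_apply]
      exact Submodule.smul_mem _ _ hw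
    · -- vertices
      intro v
      apply hgen
      intro yk
      obtain ⟨q, hq⟩ := eq_mkB_of_isInfinite (lset_infinite hx yk)
      rw [map_sub, spec_actV hρ v yk q hq, spec_actV hρ v (sh yk) q hq]
      split_ifs with h
      · exact Submodule.subset_span ⟨yk, rfl⟩
      · rw [sub_zero]
        exact Submodule.zero_mem _
    · -- edges
      intro e
      apply hgen
      intro yk
      obtain ⟨q, hq⟩ := eq_mkB_of_isInfinite (lset_infinite hx yk)
      by_cases h : G.r e = G.s (q.edges 0)
      · rw [map_sub, spec_actE hx hρ e yk q hq h, spec_actE hx hρ e (sh yk) q hq h]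
        set zk : Lset G x := ⟨(mkB (consE e q h), (yk : G.BPath × ℤ).2 + 1),
          spec_actE_mem hx yk q hq e h⟩ with hzk
        have hzk2 : (⟨(mkB (consE e q h), ((sh yk : Lset G x) : G.BPath × ℤ).2 + 1),
            spec_actE_mem hx (sh yk) q hq e h⟩ : Lset G x) = sh zk := by
          apply Subtype.ext
          apply Prod.ext
          · rfl
          · show ((sh yk : Lset G x) : G.BPath × ℤ).2 + 1 = (zk : G.BPath × ℤ).2 + n
            rw [hsnd]
            show (yk : G.BPath × ℤ).2 + n + 1 = (yk : G.BPath × ℤ).2 + 1 + n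
            ring
        rw [hzk2]
        exact Submodule.subset_span ⟨zk, rfl⟩
      · rw [map_sub, spec_actE_zero hρ e yk q hq h, spec_actE_zero hρ e (sh yk) q hq h,
          sub_zero]
        exact Submodule.zero_mem _
    · -- ghost edges
      intro e
      apply hgen
      intro yk
      obtain ⟨q, hq⟩ := eq_mkB_of_isInfinite (lset_infinite hx yk)
      by_cases h : q.edges 0 = e
      · rw [map_sub, spec_actG hx hρ e yk q hq h, spec_actG hx hρ e (sh yk) q hq h]
        set zk : Lset G x := ⟨(mkB (tl q 1), (yk : G.BPath × ℤ).2 - 1),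
          spec_actG_mem hx yk q hq⟩ with hzk
        have hzk2 : (⟨(mkB (tl q 1), ((sh yk : Lset G x) : G.BPath × ℤ).2 - 1),
            spec_actG_mem hx (sh yk) q hq⟩ : Lset G x) = sh zk := by
          apply Subtype.ext
          apply Prod.ext
          · rfl
          · show ((sh yk : Lset G x) : G.BPath × ℤ).2 - 1 = (zk : G.BPath × ℤ).2 + n
            rw [hsnd]
            show (yk : G.BPath × ℤ).2 + n - 1 = (yk : G.BPath × ℤ).2 - 1 + n
            ring
        rw [hzk2]
        exact Submodule.subset_span ⟨zk, rfl⟩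
      · rw [map_sub, spec_actG_zero hρ e yk q hq h, spec_actG_zero hρ e (sh yk) q hq h,
          sub_zero]
        exact Submodule.zero_mem _
    · intro a b ha hb w hw
      rw [map_mul]
      exact ha _ (hb w hw)
    · intro a b ha hb w hw
      rw [map_add, LinearMap.add_apply]
      exact Submodule.add_mem _ (ha w hw) (hb w hw)
  · -- P ≠ ⊥
    rw [Submodule.ne_bot_iff]
    refine ⟨Finsupp.single yk₀ 1 - Finsupp.single (sh yk₀) 1,
      Submodule.subset_span ⟨yk₀, rfl⟩, ?_⟩
    intro h0
    have hne : yk₀ ≠ sh yk₀ := by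
      intro he
      have := congrArg (fun a : Lset G x => (a : G.BPath × ℤ).2) he
      simp only [hsnd] at this
      omega
    have := congrArg (fun u : KLCarrier G K x => u yk₀) h0
    simp only [Finsupp.sub_apply, Finsupp.single_eq_same,
      Finsupp.single_eq_of_ne' (Ne.symm hne), Finsupp.coe_zero, Pi.zero_apply] at this
    norm_num at this
  · -- P ≠ ⊤
    intro htop
    set φ : KLCarrier G K x →ₗ[K] K :=
      Finsupp.linearCombination K (fun _ : Lset G x => (1 : K)) with hφ
    have hφD : ∀ w ∈ P, φ w = 0 := by
      intro w hw
      induction hw using Submodule.span_induction with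
      | mem w hwD =>
        obtain ⟨yk, rfl⟩ := hwD
        rw [map_sub, hφ, Finsupp.linearCombination_single, Finsupp.linearCombination_single]
        simp
      | zero => rw [map_zero]
      | add a b _ _ ha hb => rw [map_add, ha, hb, add_zero]
      | smul c a _ ha => rw [map_smul, ha, smul_zero]
    have h1 : φ (Finsupp.single yk₀ 1) = 1 := by
      rw [hφ, Finsupp.linearCombination_single]
      simp
    have h0 : φ (Finsupp.single yk₀ 1) = 0 := hφD _ (htop ▸ Submodule.mem_top)
    rw [h1] at h0
    exact one_ne_zero h0

end DirGraph
namespace DirGraph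

variable {G : DirGraph} {K : Type} [Field K]

theorem tailEq_symm {x y : G.BPath} (h : TailEq x y) : TailEq y x := by
  obtain ⟨k, hk⟩ := h
  exact ⟨-k, tailEqLag_symm hk⟩

/-- The backward implication of Part 3: the degree-shift isomorphism. -/
theorem part3_bwd {x : G.BPath} {ρ : LPA G K →ₐ[K] Module.End K (KLCarrier G K x)}
    (hx : x.IsInfinite) (hρ : KLSpec G K x ρ) {δ : ℤ}
    (hmem : ∀ yk : Lset G x,
      ((yk : G.BPath × ℤ).1, (yk : G.BPath × ℤ).2 + δ) ∈ Lset G x)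
    (hmem' : ∀ yk : Lset G x,
      ((yk : G.BPath × ℤ).1, (yk : G.BPath × ℤ).2 - δ) ∈ Lset G x) :
    ∃ f : KLCarrier G K x ≃ₗ[K] KLCarrier G K x,
      (∀ (η : LPA G K) (w : KLCarrier G K x), f (ρ η w) = ρ η (f w)) ∧
      (∀ k : ℤ, ∀ w ∈ KLgr G K x k, f w ∈ KLgr G K x (k + δ)) ∧
      (∀ k : ℤ, ∀ w ∈ KLgr G K x (k + δ), f.symm w ∈ KLgr G K x k) := by
  classical
  set σ : Lset G x ≃ Lset G x :=
    { toFun := fun yk => ⟨((yk : G.BPath × ℤ).1, (yk : G.BPath × ℤ).2 + δ), hmem yk⟩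
      invFun := fun yk => ⟨((yk : G.BPath × ℤ).1, (yk : G.BPath × ℤ).2 - δ), hmem' yk⟩
      left_inv := fun yk => Subtype.ext (Prod.ext rfl (by simp))
      right_inv := fun yk => Subtype.ext (Prod.ext rfl (by simp)) } with hσ
  set f : KLCarrier G K x ≃ₗ[K] KLCarrier G K x := Finsupp.domLCongr σ with hf
  have hfapp : ∀ w : KLCarrier G K x, f w = Finsupp.equivMapDomain σ w := fun w => rfl
  have hfsymm : ∀ w : KLCarrier G K x, f.symm w = Finsupp.equivMapDomain σ.symm w := by
    intro w
    rw [hf, Finsupp.domLCongr_symm]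
    rfl
  have hsingle : ∀ (a : Lset G x) (b : K), f (Finsupp.single a b) = Finsupp.single (σ a) b := by
    intro a b
    rw [hf, Finsupp.domLCongr_single]
  have hσfst : ∀ a : Lset G x, ((σ a : Lset G x) : G.BPath × ℤ).1 = (a : G.BPath × ℤ).1 :=
    fun a => rfl
  have hσsnd : ∀ a : Lset G x,
      ((σ a : Lset G x) : G.BPath × ℤ).2 = (a : G.BPath × ℤ).2 + δ := fun a => rfl
  refine ⟨f, ?_, ?_, ?_⟩
  · -- commutes with the action
    apply lpa_induction (fun η => ∀ w : KLCarrier G K x, f (ρ η w) = ρ η (f w))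
    · intro r w
      rw [AlgHom.commutes, Module.algebraMap_end_apply, Module.algebraMap_end_apply,
        map_smul]
    · -- vertices
      intro v w
      have : f.toLinearMap.comp (ρ (ofV G K v)) = (ρ (ofV G K v)).comp f.toLinearMap := by
        apply Finsupp.lhom_ext
        intro a b
        simp only [LinearMap.comp_apply, LinearEquiv.coe_coe]
        rw [single_eq_smul, map_smul, map_smul, map_smul, map_smul]
        congr 1
        obtain ⟨q, hq⟩ := eq_mkB_of_isInfinite (lset_infinite hx a)
        rw [spec_actV hρ v a q hq, hsingle, spec_actV hρ v (σ a) q (by rw [hσfst]; exact hq)]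
        split_ifs with h
        · rw [hsingle]
        · rw [map_zero]
      exact LinearMap.congr_fun this w
    · -- edges
      intro e w
      have : f.toLinearMap.comp (ρ (ofE G K e)) = (ρ (ofE G K e)).comp f.toLinearMap := by
        apply Finsupp.lhom_ext
        intro a b
        simp only [LinearMap.comp_apply, LinearEquiv.coe_coe]
        rw [single_eq_smul, map_smul, map_smul, map_smul, map_smul]
        congr 1
        obtain ⟨q, hq⟩ := eq_mkB_of_isInfinite (lset_infinite hx a)
        by_cases h : G.r e = G.s (q.edges 0)
        · rw [spec_actE hx hρ e a q hq h, hsingle, hsingle,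
            spec_actE hx hρ e (σ a) q (by rw [hσfst]; exact hq) h]
          congr 1
          apply Subtype.ext
          apply Prod.ext
          · rfl
          · show (a : G.BPath × ℤ).2 + 1 + δ = ((σ a : Lset G x) : G.BPath × ℤ).2 + 1
            rw [hσsnd]
            ring
        · rw [spec_actE_zero hρ e a q hq h, hsingle,
            spec_actE_zero hρ e (σ a) q (by rw [hσfst]; exact hq) h, map_zero]
      exact LinearMap.congr_fun this w
    · -- ghost edges
      intro e w
      have : f.toLinearMap.comp (ρ (ofG G K e)) = (ρ (ofG G K e)).comp f.toLinearMap := by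
        apply Finsupp.lhom_ext
        intro a b
        simp only [LinearMap.comp_apply, LinearEquiv.coe_coe]
        rw [single_eq_smul, map_smul, map_smul, map_smul, map_smul]
        congr 1
        obtain ⟨q, hq⟩ := eq_mkB_of_isInfinite (lset_infinite hx a)
        by_cases h : q.edges 0 = e
        · rw [spec_actG hx hρ e a q hq h, hsingle, hsingle,
            spec_actG hx hρ e (σ a) q (by rw [hσfst]; exact hq) h]
          congr 1
          apply Subtype.ext
          apply Prod.ext
          · rfl
          · show (a : G.BPath × ℤ).2 - 1 + δ = ((σ a : Lset G x) : G.BPath × ℤ).2 - 1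
            rw [hσsnd]
            ring
        · rw [spec_actG_zero hρ e a q hq h, hsingle,
            spec_actG_zero hρ e (σ a) q (by rw [hσfst]; exact hq) h, map_zero]
      exact LinearMap.congr_fun this w
    · intro a b ha hb w
      rw [map_mul, Module.End.mul_apply, Module.End.mul_apply, ha, hb]
    · intro a b ha hb w
      rw [map_add, LinearMap.add_apply, LinearMap.add_apply, map_add, ha, hb]
  · -- grading
    intro k w hw
    rw [mem_KLgr_iff] at hw ⊢
    intro a ha
    have h1 : (f w) a ≠ 0 := Finsupp.mem_support_iff.mp ha
    rw [hfapp, Finsupp.equivMapDomain_apply] at h1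
    have h2 := hw _ (Finsupp.mem_support_iff.mpr h1)
    have h3 : ((σ.symm a : Lset G x) : G.BPath × ℤ).2 = (a : G.BPath × ℤ).2 - δ := rfl
    omega
  · intro k w hw
    rw [mem_KLgr_iff] at hw ⊢
    intro a ha
    have h1 : (f.symm w) a ≠ 0 := Finsupp.mem_support_iff.mp ha
    rw [hfsymm, Finsupp.equivMapDomain_apply, Equiv.symm_symm] at h1
    have h2 := hw _ (Finsupp.mem_support_iff.mpr h1)
    have h3 : ((σ a : Lset G x) : G.BPath × ℤ).2 = (a : G.BPath × ℤ).2 + δ := rfl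
    omega

/-- Any vector fixed by all the projections along prefixes of `q₀` is supported on pairs
whose first component is `mkB q₀`. -/
theorem forced_base {x' : G.BPath} {ρ' : LPA G K →ₐ[K] Module.End K (KLCarrier G K x')}
    (hx' : x'.IsInfinite) (hρ' : KLSpec G K x' ρ') (q₀ : G.InfPath)
    (w : KLCarrier G K x') (hw0 : w ≠ 0)
    (hfix : ∀ N : ℕ, ρ' (pathElem G K (pre q₀ N) * pathStarElem G K (pre q₀ N)) w = w) :
    ∃ a : Lset G x', a ∈ w.support ∧ (a : G.BPath × ℤ).1 = mkB q₀ := by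
  obtain ⟨a, ha⟩ := Finset.nonempty_iff_ne_empty.mpr
    (fun h => hw0 (Finsupp.support_eq_empty.mp h))
  obtain ⟨q, hq⟩ := eq_mkB_of_isInfinite (lset_infinite hx' a)
  refine ⟨a, ha, ?_⟩
  rw [hq]
  congr 1
  apply InfPath.ext'
  funext i
  have hex := supp_prefix hρ' (pre q₀ (i + 1)) w (hfix (i + 1)) a ha
  rw [hq] at hex
  exact (exists_cat_pre_iff (by omega)).mp hex i (by omega)

end DirGraph

/-- for a simple closed path `c` of length `n`, the `ℤ`-graded
`L_K(E)`-module `K L_{c^∞}` is graded simple but not simple; `K L_{c^∞}(m)` and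
`K L_{c^∞}(m')` are graded isomorphic iff `n ∣ m - m'`; and if `c'` is another simple
closed path with `c'^∞` not tail-equivalent to `c^∞`, then no shift of `K L_{c^∞}` is
graded isomorphic to a shift of `K L_{c'^∞}`. -/
theorem stmt_13 (G : DirGraph) (K : Type) [Field K]
    (c : G.FinPath) (hc : c.IsSimpleClosed)
    (p₀ : G.BPath) (hp : IsCat c p₀ p₀)
    (ρ : LPA G K →ₐ[K] Module.End K (KLCarrier G K p₀)) (hρ : KLSpec G K p₀ ρ) :
    -- graded simple
    ((∃ w : KLCarrier G K p₀, w ≠ 0) ∧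
      ∀ P : Submodule K (KLCarrier G K p₀), (∀ (η : LPA G K), ∀ w ∈ P, ρ η w ∈ P) →
        GradedCarrier (fun k => KLgr G K p₀ k) ↑P → P = ⊥ ∨ P = ⊤) ∧
    -- not simple
    (∃ P : Submodule K (KLCarrier G K p₀),
      (∀ (η : LPA G K), ∀ w ∈ P, ρ η w ∈ P) ∧ P ≠ ⊥ ∧ P ≠ ⊤) ∧
    -- shifts
    (∀ m m' : ℤ,
      (∃ f : KLCarrier G K p₀ ≃ₗ[K] KLCarrier G K p₀,
        (∀ (η : LPA G K) (w : KLCarrier G K p₀), f (ρ η w) = ρ η (f w)) ∧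
        (∀ k : ℤ, ∀ w ∈ KLgr G K p₀ (k + m), f w ∈ KLgr G K p₀ (k + m')) ∧
        (∀ k : ℤ, ∀ w ∈ KLgr G K p₀ (k + m'), f.symm w ∈ KLgr G K p₀ (k + m))) ↔
      (c.length : ℤ) ∣ m - m') ∧
    -- distinct simple closed paths give non-isomorphic graded modules
    (∀ c' : G.FinPath, c'.IsSimpleClosed → ∀ p₀' : G.BPath, IsCat c' p₀' p₀' →
      ¬ TailEq p₀' p₀ →
      ∀ ρ' : LPA G K →ₐ[K] Module.End K (KLCarrier G K p₀'), KLSpec G K p₀' ρ' →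
      ∀ m m' : ℤ,
      ¬ ∃ f : KLCarrier G K p₀ ≃ₗ[K] KLCarrier G K p₀',
        (∀ (η : LPA G K) (w : KLCarrier G K p₀), f (ρ η w) = ρ' η (f w)) ∧
        (∀ k : ℤ, ∀ w ∈ KLgr G K p₀ (k + m), f w ∈ KLgr G K p₀' (k + m')) ∧
        (∀ k : ℤ, ∀ w ∈ KLgr G K p₀' (k + m'), f.symm w ∈ KLgr G K p₀ (k + m))) := by
  classical
  have hn : 0 < c.edges.length := hc.1.1
  have hpinf := closed_cat_infinite hc.1.1 hp
  obtain ⟨q₀, rfl⟩ := eq_mkB_of_isInfinite hpinf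
  obtain ⟨hpre, hper⟩ := closed_cat_spec hp
  have hsrc : c.src = G.s (q₀.edges 0) := by rw [← hc.1.2, hp.1, mkB_src]
  have hx : (mkB q₀).IsInfinite := mkB_isInfinite q₀
  have hmem0 : (mkB q₀, (0 : ℤ)) ∈ Lset G (mkB q₀) :=
    ⟨pre q₀ 0, pre q₀ 0, mkB (tl q₀ 0), catPT q₀ 0, catPT q₀ 0, by simp⟩
  set s₀ : Lset G (mkB q₀) := ⟨(mkB q₀, 0), hmem0⟩ with hs₀
  have hshift : ∀ δ : ℤ, ((c.edges.length : ℤ) ∣ δ) → ∀ yk : Lset G (mkB q₀),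
      ((yk : G.BPath × ℤ).1, (yk : G.BPath × ℤ).2 + δ) ∈ Lset G (mkB q₀) := by
    intro δ hδ yk
    exact tailEqLag_trans (lset_tailEqLag yk) (lag_self_int hper δ hδ) hx
  have hproj : ∀ N : ℕ,
      ρ (pathElem G K (pre q₀ N) * pathStarElem G K (pre q₀ N)) (Finsupp.single s₀ 1) =
        Finsupp.single s₀ 1 := by
    intro N
    rw [spec_proj hρ (pre q₀ N) s₀, if_pos]
    exact ⟨_, catPT q₀ N⟩
  refine ⟨⟨⟨Finsupp.single s₀ 1, fun h => one_ne_zero (Finsupp.single_eq_zero.mp h)⟩, ?_⟩, ?_, ?_, ?_⟩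
  · -- graded simple
    intro P hinvP hgrP
    by_cases hP : P = ⊥
    · exact Or.inl hP
    · exact Or.inr (part1 hx hρ P hinvP hgrP hP)
  · -- not simple
    exact part2 hx hρ hn (fun yk => hshift _ ⟨1, by ring⟩ yk) s₀
  · -- shifts
    intro m m'
    constructor
    · rintro ⟨f, hcomm, hgr1, hgr2⟩
      set w : KLCarrier G K (mkB q₀) := f (Finsupp.single s₀ 1) with hw
      have hw0 : w ≠ 0 := by
        intro h
        have := (LinearEquiv.map_eq_zero_iff f).mp h
        exact one_ne_zero (Finsupp.single_eq_zero.mp this)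
      have hfix : ∀ N : ℕ,
          ρ (pathElem G K (pre q₀ N) * pathStarElem G K (pre q₀ N)) w = w := by
        intro N
        rw [hw, ← hcomm, hproj N]
      obtain ⟨a, haw, ha1⟩ := forced_base hx hρ q₀ w hw0 hfix
      have hwgr : w ∈ KLgr G K (mkB q₀) (-m + m') := by
        apply hgr1 (-m)
        apply single_mem_KLgr
        show (0 : ℤ) = -m + m
        ring
      have ha2 : (a : G.BPath × ℤ).2 = -m + m' := mem_KLgr_iff.mp hwgr a haw
      have hlag : TailEqLag (mkB q₀) (mkB q₀) (-m + m') := by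
        have := lset_tailEqLag a
        rwa [ha1, ha2] at this
      have hdvd := lag_self_dvd hc hpre hper hsrc hlag
      have : m - m' = -(-m + m') := by ring
      rw [show (c.length : ℤ) = (c.edges.length : ℤ) from rfl, this]
      exact dvd_neg.mpr hdvd
    · intro hdvd
      have hdvd' : (c.edges.length : ℤ) ∣ (m' - m) := by
        have : m' - m = -(m - m') := by ring
        rw [this]
        exact dvd_neg.mpr hdvd
      have hmemδ := hshift (m' - m) hdvd'
      have hmemδ' : ∀ yk : Lset G (mkB q₀),
          ((yk : G.BPath × ℤ).1, (yk : G.BPath × ℤ).2 - (m' - m)) ∈ Lset G (mkB q₀) := by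
        intro yk
        have := hshift (-(m' - m)) (dvd_neg.mpr hdvd') yk
        rwa [← sub_eq_add_neg] at this
      obtain ⟨f, h1, h2, h3⟩ := part3_bwd hx hρ hmemδ hmemδ'
      refine ⟨f, h1, ?_, ?_⟩
      · intro k v hv
        have := h2 (k + m) v hv
        rwa [show k + m + (m' - m) = k + m' by ring] at this
      · intro k v hv
        apply h3 (k + m)
        rwa [show k + m + (m' - m) = k + m' by ring]
    -- distinct simple closed paths
  · intro c' hc' p₀' hp' hneq ρ' hρ' m m'
    rintro ⟨f, hcomm, hgr1, hgr2⟩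
    have hpinf' := closed_cat_infinite hc'.1.1 hp'
    obtain ⟨q₀', rfl⟩ := eq_mkB_of_isInfinite hpinf'
    have hx' : (mkB q₀').IsInfinite := mkB_isInfinite q₀'
    set w : KLCarrier G K (mkB q₀') := f (Finsupp.single s₀ 1) with hw
    have hw0 : w ≠ 0 := by
      intro h
      have := (LinearEquiv.map_eq_zero_iff f).mp h
      exact one_ne_zero (Finsupp.single_eq_zero.mp this)
    have hfix : ∀ N : ℕ,
        ρ' (pathElem G K (pre q₀ N) * pathStarElem G K (pre q₀ N)) w = w := by
      intro N
      rw [hw, ← hcomm, hproj N]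
    obtain ⟨a, haw, ha1⟩ := forced_base hx' hρ' q₀ w hw0 hfix
    apply hneq
    apply tailEq_symm
    refine ⟨(a : G.BPath × ℤ).2, ?_⟩
    have := lset_tailEqLag a
    rwa [ha1] at this
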